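/- arXiv:2304.10002 — 2 statements merged into one kernel-verified Lean document; each statement's English description precedes it below -/
import Mathlib

section
/- Let (N,K,C,T) be a generalized highway problem with a partition P = {P_1,…,P_A} of N into a priori unions, with c the associated cost game. Then the Owen value of player i in union P_a equals Σ_{t ∈ T(i)} C(t)/(|𝒜_t|·|N_t^a|), where 𝒜_t is the set of unions containing some agent that uses section t and N_t^a = {j ∈ P_a : t ∈ T(j)}. -/
open Finset

lemma nat_key (n m : ℕ) (h : m < n) : n * (n-1).choose m = n.choose m * (n - m) := by
  obtain ⟨n', rfl⟩ : ∃ n', n = n'+1 := ⟨n-1, by omega⟩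
  rw [Nat.add_sub_cancel, Nat.add_one_mul_choose_eq, Nat.choose_succ_right_eq]

lemma hockey (n m : ℕ) (h : m < n) :
    ∑ k ∈ range (m+1), (n-1-k).choose (m-k) = n.choose m := by
  have h1 : ∑ k ∈ range (m+1), (n-1-k).choose (m-k)
      = ∑ x ∈ Icc (n-1-m) (n-1), x.choose (n-1-m) := by
    apply Finset.sum_nbij' (fun k => n-1-k) (fun x => n-1-x)
    · intro k hk; simp only [mem_range] at hk; simp only [mem_Icc]; omega
    · intro x hx; simp only [mem_Icc] at hx; simp only [mem_range]; omega
    · intro k hk; simp only [mem_range] at hk; omega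
    · intro x hx; simp only [mem_Icc] at hx; omega
    · intro k hk; simp only [mem_range] at hk
      have : m - k = (n-1-k) - (n-1-m) := by omega
      rw [this]
      exact Nat.choose_symm (by omega)
  rw [h1]
  have h2 : n - 1 - m + 1 = n - m := by omega
  have := Nat.sum_Icc_choose (n-1) (n-1-m)
  rw [this]
  have h3 : n - 1 + 1 = n := by omega
  rw [h3, h2]
  have : n - (n - m) = m := by omega
  rw [← this, Nat.choose_symm (by omega)]

lemma key_sum (n m : ℕ) (h : m < n) :
    ∑ k ∈ range (m+1), (m.choose k : ℝ) / (n * (n-1).choose k) = 1 / ((n - m : ℕ) : ℝ) := by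
  have hstep : ∀ k ∈ range (m+1), (m.choose k : ℝ) / (n * (n-1).choose k)
      = ((n-1-k).choose (m-k) : ℝ) / (n * (n-1).choose m) := by
    intro k hk
    rw [mem_range] at hk
    have hkm : k ≤ m := by omega
    have hb : (n-1).choose m * m.choose k = (n-1).choose k * ((n-1)-k).choose (m-k) :=
      Nat.choose_mul hkm
    have p1 : 0 < (n-1).choose k := Nat.choose_pos (by omega)
    have p2 : 0 < (n-1).choose m := Nat.choose_pos (by omega)
    have hn : (0:ℕ) < n := by omega
    rw [div_eq_div_iff (by positivity) (by positivity)]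
    have : m.choose k * (n * (n-1).choose m) = (n-1-k).choose (m-k) * (n * (n-1).choose k) := by
      calc m.choose k * (n * (n-1).choose m) = n * ((n-1).choose m * m.choose k) := by ring
        _ = n * ((n-1).choose k * ((n-1)-k).choose (m-k)) := by rw [hb]
        _ = (n-1-k).choose (m-k) * (n * (n-1).choose k) := by ring
    exact_mod_cast congrArg (Nat.cast : ℕ → ℝ) this
  rw [Finset.sum_congr rfl hstep, ← Finset.sum_div]
  rw [show ∑ k ∈ range (m+1), ((n-1-k).choose (m-k) : ℝ)
      = ((∑ k ∈ range (m+1), (n-1-k).choose (m-k) : ℕ) : ℝ) by push_cast; ring]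
  rw [hockey n m h]
  have hnk : ((n:ℝ) * (n-1).choose m) = (n.choose m : ℝ) * ((n - m : ℕ) : ℝ) := by
    exact_mod_cast congrArg (Nat.cast : ℕ → ℝ) (nat_key n m h)
  rw [hnk]
  have hc0 : (n.choose m : ℝ) ≠ 0 := by
    exact_mod_cast (Nat.choose_pos (by omega : m ≤ n)).ne'
  rw [div_mul_eq_div_div, div_self hc0]

lemma powerset_key {α : Type*} [DecidableEq α] (U : Finset α) (n : ℕ) (h : U.card < n) :
    ∑ H ∈ U.powerset, (1:ℝ)/(n * (n-1).choose H.card) = 1/((n - U.card : ℕ) : ℝ) := by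
  rw [Finset.sum_powerset_apply_card (fun k => (1:ℝ)/(n*(n-1).choose k))]
  rw [← key_sum n U.card h]
  apply Finset.sum_congr rfl
  intro k _
  rw [nsmul_eq_mul, mul_one_div]

lemma restrict_sum {α : Type*} [DecidableEq α] (U : Finset α) (pred : α → Prop)
    [DecidablePred pred] (f : Finset α → ℝ) :
    ∑ H ∈ U.powerset, (if ∃ b ∈ H, pred b then 0 else f H)
      = ∑ H ∈ (U.filter (fun b => ¬ pred b)).powerset, f H := by
  have h1 : ∑ H ∈ (U.filter (fun b => ¬ pred b)).powerset,
      (if ∃ b ∈ H, pred b then 0 else f H)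
      = ∑ H ∈ U.powerset, (if ∃ b ∈ H, pred b then 0 else f H) := by
    apply Finset.sum_subset (Finset.powerset_mono.2 (Finset.filter_subset _ _))
    intro H hH hH'
    rw [Finset.mem_powerset] at hH
    rw [Finset.mem_powerset] at hH'
    obtain ⟨b, hbH, hb⟩ := Finset.not_subset.1 hH'
    rw [if_pos]
    exact ⟨b, hbH, by
      by_contra hnp
      exact hb (Finset.mem_filter.2 ⟨hH hbH, hnp⟩)⟩
  rw [← h1]
  apply Finset.sum_congr rfl
  intro H hH
  rw [Finset.mem_powerset] at hH
  rw [if_neg]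
  rintro ⟨b, hbH, hb⟩
  exact (Finset.mem_filter.1 (hH hbH)).2 hb

/-- The Owen value of a generalized highway game with a priori
unions is `Ψ_i = Σ_{t ∈ T(i)} C(t)/(|𝒜_t|·|N_t^a|)` for `i ∈ P_a`. -/
theorem owen_value_generalized_highway
    {N K M : Type*} [Fintype N] [DecidableEq N] [Fintype K] [DecidableEq K]
    [Fintype M] [DecidableEq M]
    (C : K → ℝ) (hC : ∀ t, 0 ≤ C t)
    (T : N → Finset K) (hT : ∀ i, (T i).Nonempty)
    (hK : ∀ t : K, ∃ i, t ∈ T i)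
    (c : Finset N → ℝ) (hc : ∀ S : Finset N, c S = ∑ t ∈ S.biUnion T, C t)
    (Pp : M → Finset N)
    (hdis : ∀ a b : M, a ≠ b → Disjoint (Pp a) (Pp b))
    (hcov : ∀ i : N, ∃ a : M, i ∈ Pp a)
    (hne : ∀ a : M, (Pp a).Nonempty)
    (a : M) (i : N) (hi : i ∈ Pp a) :
    (∑ H ∈ ((Finset.univ : Finset M).erase a).powerset,
      ∑ S ∈ ((Pp a).erase i).powerset,
        (1 / (((Pp a).card * Fintype.card M : ℕ) : ℝ)) *
          (1 / (((Fintype.card M - 1).choose H.card *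
                  ((Pp a).card - 1).choose S.card : ℕ) : ℝ)) *
          (c (H.biUnion Pp ∪ S ∪ {i}) - c (H.biUnion Pp ∪ S)))
      = ∑ t ∈ T i, C t /
          ((((Finset.univ : Finset M).filter (fun b => ∃ j ∈ Pp b, t ∈ T j)).card : ℝ) *
            (((Pp a).filter (fun j => t ∈ T j)).card : ℝ)) := by
  classical
  set A := Fintype.card M with hAdef
  set p := (Pp a).card with hpdef
  have hA : 0 < A := Fintype.card_pos_iff.2 ⟨a⟩
  have hp : 0 < p := Finset.card_pos.2 ⟨i, hi⟩
  set U1 := (Finset.univ : Finset M).erase a with hU1def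
  set U2 := (Pp a).erase i with hU2def
  have hU1 : U1.card = A - 1 := by
    rw [hU1def, Finset.card_erase_of_mem (Finset.mem_univ a), Finset.card_univ]
  have hU2 : U2.card = p - 1 := Finset.card_erase_of_mem hi
  -- Step 1: marginal contribution
  have hdiff : ∀ (H : Finset M) (S : Finset N),
      c (H.biUnion Pp ∪ S ∪ {i}) - c (H.biUnion Pp ∪ S)
        = ∑ t ∈ T i, (if t ∈ (H.biUnion Pp ∪ S).biUnion T then 0 else C t) := by
    intro H S
    rw [hc, hc]
    set D := (H.biUnion Pp ∪ S).biUnion T with hD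
    have hun : (H.biUnion Pp ∪ S ∪ {i}).biUnion T = D ∪ (T i \ D) := by
      rw [Finset.union_sdiff_self_eq_union,
        Finset.union_comm (H.biUnion Pp ∪ S) ({i} : Finset N), ← Finset.insert_eq,
        Finset.biUnion_insert]
      exact Finset.union_comm _ _
    rw [hun, Finset.sum_union Finset.disjoint_sdiff]
    have hrest : ∑ t ∈ T i \ D, C t = ∑ t ∈ T i, (if t ∈ D then 0 else C t) := by
      rw [Finset.sdiff_eq_filter, Finset.sum_filter]
      exact Finset.sum_congr rfl fun t _ => by rw [ite_not]
    rw [hrest]; ring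
  -- Step 2: rewrite / swap sums
  have step2 : (∑ H ∈ U1.powerset, ∑ S ∈ U2.powerset,
        (1 / ((p * A : ℕ) : ℝ)) *
          (1 / (((A - 1).choose H.card * (p - 1).choose S.card : ℕ) : ℝ)) *
          (c (H.biUnion Pp ∪ S ∪ {i}) - c (H.biUnion Pp ∪ S)))
      = ∑ t ∈ T i, ∑ H ∈ U1.powerset, ∑ S ∈ U2.powerset,
          (1 / ((p * A : ℕ) : ℝ)) *
            (1 / (((A - 1).choose H.card * (p - 1).choose S.card : ℕ) : ℝ)) *
            (if t ∈ (H.biUnion Pp ∪ S).biUnion T then 0 else C t) := by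
    calc (∑ H ∈ U1.powerset, ∑ S ∈ U2.powerset,
        (1 / ((p * A : ℕ) : ℝ)) *
          (1 / (((A - 1).choose H.card * (p - 1).choose S.card : ℕ) : ℝ)) *
          (c (H.biUnion Pp ∪ S ∪ {i}) - c (H.biUnion Pp ∪ S)))
        = ∑ H ∈ U1.powerset, ∑ S ∈ U2.powerset, ∑ t ∈ T i,
            (1 / ((p * A : ℕ) : ℝ)) *
              (1 / (((A - 1).choose H.card * (p - 1).choose S.card : ℕ) : ℝ)) *
              (if t ∈ (H.biUnion Pp ∪ S).biUnion T then 0 else C t) := by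
          refine Finset.sum_congr rfl fun H _ => Finset.sum_congr rfl fun S _ => ?_
          rw [hdiff, Finset.mul_sum]
      _ = ∑ H ∈ U1.powerset, ∑ t ∈ T i, ∑ S ∈ U2.powerset,
            (1 / ((p * A : ℕ) : ℝ)) *
              (1 / (((A - 1).choose H.card * (p - 1).choose S.card : ℕ) : ℝ)) *
              (if t ∈ (H.biUnion Pp ∪ S).biUnion T then 0 else C t) :=
          Finset.sum_congr rfl fun H _ => Finset.sum_comm
      _ = _ := Finset.sum_comm
  rw [step2]
  -- Step 3: per-section computation
  refine Finset.sum_congr rfl fun t ht => ?_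
  set Am := ((Finset.univ : Finset M).filter (fun b => ∃ j ∈ Pp b, t ∈ T j)).card with hAm
  set nt := ((Pp a).filter (fun j => t ∈ T j)).card with hnt
  have haAm : a ∈ (Finset.univ : Finset M).filter (fun b => ∃ j ∈ Pp b, t ∈ T j) :=
    Finset.mem_filter.2 ⟨Finset.mem_univ a, ⟨i, hi, ht⟩⟩
  have hAm1 : 1 ≤ Am := Finset.card_pos.2 ⟨a, haAm⟩
  have hAmA : Am ≤ A := by
    calc Am ≤ (Finset.univ : Finset M).card := Finset.card_filter_le _ _
      _ = A := Finset.card_univ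
  have hint : i ∈ (Pp a).filter (fun j => t ∈ T j) := Finset.mem_filter.2 ⟨hi, ht⟩
  have hnt1 : 1 ≤ nt := Finset.card_pos.2 ⟨i, hint⟩
  have hntp : nt ≤ p := Finset.card_filter_le _ _
  -- complement filters
  have hfm : U1.filter (fun b => ¬ ∃ j ∈ Pp b, t ∈ T j)
      = (Finset.univ : Finset M).filter (fun b => ¬ ∃ j ∈ Pp b, t ∈ T j) := by
    ext b
    constructor
    · intro hbm
      exact Finset.mem_filter.2 ⟨Finset.mem_univ b, (Finset.mem_filter.1 hbm).2⟩
    · intro hbm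
      have h := (Finset.mem_filter.1 hbm).2
      refine Finset.mem_filter.2 ⟨Finset.mem_erase.2 ⟨?_, Finset.mem_univ b⟩, h⟩
      intro hba
      exact h (by rw [hba]; exact ⟨i, hi, ht⟩)
  have hfmcard : (U1.filter (fun b => ¬ ∃ j ∈ Pp b, t ∈ T j)).card = A - Am := by
    rw [hfm]
    have := Finset.card_filter_add_card_filter_not
      (s := (Finset.univ : Finset M)) (p := fun b => ∃ j ∈ Pp b, t ∈ T j)
    rw [Finset.card_univ] at this
    omega
  have hfn : U2.filter (fun j => ¬ t ∈ T j)
      = (Pp a).filter (fun j => ¬ t ∈ T j) := by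
    ext j
    constructor
    · intro hj
      exact Finset.mem_filter.2
        ⟨Finset.mem_of_mem_erase (Finset.mem_filter.1 hj).1, (Finset.mem_filter.1 hj).2⟩
    · intro hj
      have h := (Finset.mem_filter.1 hj).2
      refine Finset.mem_filter.2 ⟨Finset.mem_erase.2 ⟨?_, (Finset.mem_filter.1 hj).1⟩, h⟩
      intro hji
      exact h (by rw [hji]; exact ht)
  have hfncard : (U2.filter (fun j => ¬ t ∈ T j)).card = p - nt := by
    rw [hfn]
    have := Finset.card_filter_add_card_filter_not
      (s := Pp a) (p := fun j => t ∈ T j)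
    omega
  -- term rewriting
  have hterm : ∀ (H : Finset M) (S : Finset N),
      (1 / ((p * A : ℕ) : ℝ)) *
        (1 / (((A - 1).choose H.card * (p - 1).choose S.card : ℕ) : ℝ)) *
        (if t ∈ (H.biUnion Pp ∪ S).biUnion T then 0 else C t)
      = (if ∃ b ∈ H, ∃ j ∈ Pp b, t ∈ T j then 0
          else (1:ℝ)/(A * (A-1).choose H.card)) *
        (if ∃ j ∈ S, t ∈ T j then 0
          else (1:ℝ)/(p * (p-1).choose S.card) * C t) := by
    intro H S
    have hiff : (t ∈ (H.biUnion Pp ∪ S).biUnion T)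
        ↔ (∃ b ∈ H, ∃ j ∈ Pp b, t ∈ T j) ∨ (∃ j ∈ S, t ∈ T j) := by
      simp only [Finset.mem_biUnion, Finset.mem_union]
      constructor
      · rintro ⟨j, hj | hj, htj⟩
        · obtain ⟨b, hbH, hjb⟩ := hj
          exact Or.inl ⟨b, hbH, j, hjb, htj⟩
        · exact Or.inr ⟨j, hj, htj⟩
      · rintro (⟨b, hbH, j, hjb, htj⟩ | ⟨j, hj, htj⟩)
        · exact ⟨j, Or.inl ⟨b, hbH, hjb⟩, htj⟩
        · exact ⟨j, Or.inr hj, htj⟩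
    rw [if_congr hiff rfl rfl]
    by_cases h1 : ∃ b ∈ H, ∃ j ∈ Pp b, t ∈ T j <;>
      by_cases h2 : ∃ j ∈ S, t ∈ T j <;>
      simp only [h1, h2, if_true, if_false, true_or, or_true, or_false, false_or,
        if_pos, if_neg, not_false_iff, mul_zero, zero_mul] <;>
      push_cast <;> ring
  calc ∑ H ∈ U1.powerset, ∑ S ∈ U2.powerset,
        (1 / ((p * A : ℕ) : ℝ)) *
          (1 / (((A - 1).choose H.card * (p - 1).choose S.card : ℕ) : ℝ)) *
          (if t ∈ (H.biUnion Pp ∪ S).biUnion T then 0 else C t)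
      = (∑ H ∈ U1.powerset, (if ∃ b ∈ H, ∃ j ∈ Pp b, t ∈ T j then 0
            else (1:ℝ)/(A * (A-1).choose H.card))) *
        (∑ S ∈ U2.powerset, (if ∃ j ∈ S, t ∈ T j then 0
            else (1:ℝ)/(p * (p-1).choose S.card) * C t)) := by
        rw [Finset.sum_mul_sum]
        exact Finset.sum_congr rfl fun H _ => Finset.sum_congr rfl fun S _ => hterm H S
    _ = (∑ H ∈ (U1.filter (fun b => ¬ ∃ j ∈ Pp b, t ∈ T j)).powerset,
          (1:ℝ)/(A * (A-1).choose H.card)) *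
        ((∑ S ∈ (U2.filter (fun j => ¬ t ∈ T j)).powerset,
          (1:ℝ)/(p * (p-1).choose S.card)) * C t) := by
        rw [restrict_sum U1 (fun b => ∃ j ∈ Pp b, t ∈ T j)
            (fun H => (1:ℝ)/(A * (A-1).choose H.card)),
          restrict_sum U2 (fun j => t ∈ T j)
            (fun S => (1:ℝ)/(p * (p-1).choose S.card) * C t),
          ← Finset.sum_mul]
    _ = (1:ℝ)/((A - (A - Am) : ℕ) : ℝ) * ((1:ℝ)/((p - (p - nt) : ℕ) : ℝ) * C t) := by
        rw [← hfmcard, ← hfncard,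
          powerset_key _ A (by rw [hfmcard]; omega),
          powerset_key _ p (by rw [hfncard]; omega)]
    _ = C t / ((Am : ℝ) * (nt : ℝ)) := by
        rw [show A - (A - Am) = Am by omega, show p - (p - nt) = nt by omega]
        ring
end

section
/- Uniqueness part of the Owen characterization: if a solution σ on generalized highway problems with a coalitional structure satisfies Pareto optimality, equal treatment of agents within unions, equal treatment of unions, and individual independence of outside changes, then σ coincides with the Owen value, i.e., σ_i(Γ,P) = Σ_{t∈T(i)} C(t)/(|𝒜_t|·|N_t^a|) for every player i ∈ P_a. -/
open Finset

/-- A generalized highway problem with a coalitional structure: agents drawn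
from `𝒩`, sections from `𝒦`, union labels from `ℳ`.  `N` is the (finite) agent
set, `K` the section set, `C` the section costs, `T i` the sections used by
agent `i`, `M` the set of (nonempty) a priori unions and `u i` the union label
of agent `i`. -/
structure GHP (𝒩 𝒦 ℳ : Type*) where
  N : Finset 𝒩
  K : Finset 𝒦
  C : 𝒦 → ℝ
  T : 𝒩 → Finset 𝒦
  M : Finset ℳ
  u : 𝒩 → Option ℳ

namespace GHP

variable {𝒩 𝒦 ℳ : Type*} [DecidableEq 𝒩] [DecidableEq 𝒦] [DecidableEq ℳ]

/-- The members of the a priori union labelled `a`. -/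
def part (Γ : GHP 𝒩 𝒦 ℳ) (a : ℳ) : Finset 𝒩 :=
  Γ.N.filter (fun i => Γ.u i = some a)

/-- Validity of a generalized highway problem with a coalitional structure. -/
def Valid (Γ : GHP 𝒩 𝒦 ℳ) : Prop :=
  (∀ i ∈ Γ.N, (Γ.T i).Nonempty ∧ Γ.T i ⊆ Γ.K) ∧
  (∀ i, i ∉ Γ.N → Γ.T i = ∅) ∧
  (∀ t ∈ Γ.K, ∃ i ∈ Γ.N, t ∈ Γ.T i) ∧
  (∀ t, 0 ≤ Γ.C t) ∧ (∀ t, t ∉ Γ.K → Γ.C t = 0) ∧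
  (∀ i ∈ Γ.N, ∃ a ∈ Γ.M, Γ.u i = some a) ∧
  (∀ i, i ∉ Γ.N → Γ.u i = none) ∧
  (∀ a ∈ Γ.M, (Γ.part a).Nonempty)

/-- Restriction of a problem (and its partition) to a set of sections `K'`. -/
def restrict (Γ : GHP 𝒩 𝒦 ℳ) (K' : Finset 𝒦) : GHP 𝒩 𝒦 ℳ where
  N := Γ.N.filter (fun i => (Γ.T i ∩ K').Nonempty)
  K := K'
  C := fun t => if t ∈ K' then Γ.C t else 0
  T := fun i => if (Γ.T i ∩ K').Nonempty then Γ.T i ∩ K' else ∅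
  M := Γ.M.filter (fun a =>
    ((Γ.N.filter (fun i => (Γ.T i ∩ K').Nonempty)).filter
      (fun i => Γ.u i = some a)).Nonempty)
  u := fun i => if i ∈ Γ.N.filter (fun i => (Γ.T i ∩ K').Nonempty) then Γ.u i else none

/-- The sections used by union `a`. -/
def unionSections (Γ : GHP 𝒩 𝒦 ℳ) (a : ℳ) : Finset 𝒦 := (Γ.part a).biUnion Γ.T

/-- The set of unions using section `t`. -/
def usingUnions (Γ : GHP 𝒩 𝒦 ℳ) (t : 𝒦) : Finset ℳ :=
  Γ.M.filter (fun a => t ∈ Γ.unionSections a)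

/-- The set of agents using section `t`. -/
def usingAgents (Γ : GHP 𝒩 𝒦 ℳ) (t : 𝒦) : Finset 𝒩 :=
  Γ.N.filter (fun i => t ∈ Γ.T i)

/-- The members of `i`'s own union that use section `t`. -/
def usingMates (Γ : GHP 𝒩 𝒦 ℳ) (i : 𝒩) (t : 𝒦) : Finset 𝒩 :=
  (Γ.N.filter (fun j => Γ.u j = Γ.u i)).filter (fun j => t ∈ Γ.T j)

/-- The Owen value of a generalized highway problem with a coalitional
structure, in its explicit form `Ψ_i = Σ_{t∈T(i)} C(t)/(|𝒜_t|·|N_t^a|)`. -/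
noncomputable def owen (Γ : GHP 𝒩 𝒦 ℳ) (i : 𝒩) : ℝ :=
  ∑ t ∈ Γ.T i, Γ.C t / (((Γ.usingUnions t).card : ℝ) * ((Γ.usingMates i t).card : ℝ))

set_option linter.unusedSectionVars false

lemma aux_mul_div (c A : ℝ) {n : ℝ} (hn : n ≠ 0) : n * (c / (A * n)) = c / A := by
  rcases eq_or_ne A 0 with h | h
  · simp [h]
  · field_simp

lemma ghp_ext {Γ₁ Γ₂ : GHP 𝒩 𝒦 ℳ} (h1 : Γ₁.N = Γ₂.N) (h2 : Γ₁.K = Γ₂.K)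
    (h3 : Γ₁.C = Γ₂.C) (h4 : Γ₁.T = Γ₂.T) (h5 : Γ₁.M = Γ₂.M) (h6 : Γ₁.u = Γ₂.u) :
    Γ₁ = Γ₂ := by
  cases Γ₁; cases Γ₂; simp_all

lemma mem_part {Γ : GHP 𝒩 𝒦 ℳ} {a : ℳ} {i : 𝒩} :
    i ∈ Γ.part a ↔ i ∈ Γ.N ∧ Γ.u i = some a := by simp [part]

lemma mem_unionSections {Γ : GHP 𝒩 𝒦 ℳ} {a : ℳ} {t : 𝒦} :
    t ∈ Γ.unionSections a ↔ ∃ j ∈ Γ.part a, t ∈ Γ.T j := by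
  simp [unionSections]

lemma unionSections_subset {Γ : GHP 𝒩 𝒦 ℳ} (hV : Γ.Valid) (a : ℳ) :
    Γ.unionSections a ⊆ Γ.K := by
  intro t ht
  obtain ⟨j, hj, hjt⟩ := mem_unionSections.mp ht
  exact (hV.1 j (mem_part.mp hj).1).2 hjt

lemma usingUnions_nonempty {Γ : GHP 𝒩 𝒦 ℳ} (hV : Γ.Valid) {t : 𝒦} (ht : t ∈ Γ.K) :
    (Γ.usingUnions t).Nonempty := by
  obtain ⟨j, hjN, hjt⟩ := hV.2.2.1 t ht
  obtain ⟨a, haM, hua⟩ := hV.2.2.2.2.2.1 j hjN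
  exact ⟨a, by
    simp only [usingUnions, mem_filter]
    exact ⟨haM, mem_unionSections.mpr ⟨j, mem_part.mpr ⟨hjN, hua⟩, hjt⟩⟩⟩

lemma usingMates_eq {Γ : GHP 𝒩 𝒦 ℳ} {a : ℳ} {i : 𝒩} (hi : Γ.u i = some a) (t : 𝒦) :
    Γ.usingMates i t = (Γ.part a).filter (fun j => t ∈ Γ.T j) := by
  ext j; simp [usingMates, part, hi, and_assoc]

lemma owen_congr {Γ : GHP 𝒩 𝒦 ℳ} {i j : 𝒩} (hu : Γ.u i = Γ.u j) (hT : Γ.T i = Γ.T j) :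
    Γ.owen i = Γ.owen j := by
  simp [owen, usingMates, hu, hT]

lemma sum_parts {Γ : GHP 𝒩 𝒦 ℳ} (hV : Γ.Valid) (f : 𝒩 → ℝ) :
    ∑ j ∈ Γ.N, f j = ∑ b ∈ Γ.M, ∑ j ∈ Γ.part b, f j := by
  rw [← Finset.sum_biUnion]
  · congr 1
    ext j
    simp only [Finset.mem_biUnion, mem_part]
    constructor
    · intro hj
      obtain ⟨a, haM, hua⟩ := hV.2.2.2.2.2.1 j hj
      exact ⟨a, haM, hj, hua⟩
    · rintro ⟨b, _, hj, _⟩; exact hj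
  · intro b hb c hc hbc
    simp only [Finset.disjoint_left]
    intro j hjb hjc
    have h1 := (mem_part.mp hjb).2
    have h2 := (mem_part.mp hjc).2
    rw [h1] at h2
    exact hbc (Option.some.inj h2)

lemma sum_owen_part {Γ : GHP 𝒩 𝒦 ℳ} (a : ℳ) :
    ∑ j ∈ Γ.part a, Γ.owen j
      = ∑ t ∈ Γ.unionSections a, Γ.C t / ((Γ.usingUnions t).card : ℝ) := by
  have huj : ∀ j ∈ Γ.part a, Γ.u j = some a := fun j hj => (mem_part.mp hj).2
  have hTsub : ∀ j ∈ Γ.part a, Γ.T j ⊆ Γ.unionSections a := fun j hj t ht =>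
    mem_unionSections.mpr ⟨j, hj, ht⟩
  calc ∑ j ∈ Γ.part a, Γ.owen j
      = ∑ j ∈ Γ.part a, ∑ t ∈ Γ.unionSections a,
          (if t ∈ Γ.T j then Γ.C t / (((Γ.usingUnions t).card : ℝ) *
            ((((Γ.part a).filter fun k => t ∈ Γ.T k)).card : ℝ)) else 0) := by
        refine Finset.sum_congr rfl fun j hj => ?_
        rw [Finset.sum_ite_mem, Finset.inter_eq_right.mpr (hTsub j hj)]
        unfold owen
        refine Finset.sum_congr rfl fun t ht => ?_
        rw [usingMates_eq (huj j hj)]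
    _ = ∑ t ∈ Γ.unionSections a, ∑ j ∈ Γ.part a,
          (if t ∈ Γ.T j then Γ.C t / (((Γ.usingUnions t).card : ℝ) *
            ((((Γ.part a).filter fun k => t ∈ Γ.T k)).card : ℝ)) else 0) :=
        Finset.sum_comm
    _ = ∑ t ∈ Γ.unionSections a, Γ.C t / ((Γ.usingUnions t).card : ℝ) := by
        refine Finset.sum_congr rfl fun t ht => ?_
        rw [Finset.sum_ite, Finset.sum_const_zero, add_zero, Finset.sum_const, nsmul_eq_mul]
        have hne : ((((Γ.part a).filter fun k => t ∈ Γ.T k)).card : ℝ) ≠ 0 := by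
          obtain ⟨j, hj, hjt⟩ := mem_unionSections.mp ht
          have : j ∈ (Γ.part a).filter fun k => t ∈ Γ.T k := Finset.mem_filter.mpr ⟨hj, hjt⟩
          exact_mod_cast Finset.card_ne_zero_of_mem this
        exact aux_mul_div _ _ hne

lemma sum_owen_N {Γ : GHP 𝒩 𝒦 ℳ} (hV : Γ.Valid) :
    ∑ j ∈ Γ.N, Γ.owen j = ∑ t ∈ Γ.K, Γ.C t := by
  rw [sum_parts hV]
  have h1 : ∀ b ∈ Γ.M, ∑ j ∈ Γ.part b, Γ.owen j
      = ∑ t ∈ Γ.K, (if t ∈ Γ.unionSections b then Γ.C t / ((Γ.usingUnions t).card : ℝ) else 0) := by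
    intro b hb
    rw [sum_owen_part, Finset.sum_ite_mem, Finset.inter_eq_right.mpr (unionSections_subset hV b)]
  rw [Finset.sum_congr rfl h1, Finset.sum_comm]
  refine Finset.sum_congr rfl fun t ht => ?_
  rw [Finset.sum_ite, Finset.sum_const_zero, add_zero, Finset.sum_const, nsmul_eq_mul]
  have hQ : Γ.M.filter (fun b => t ∈ Γ.unionSections b) = Γ.usingUnions t := rfl
  rw [hQ]
  have hne : ((Γ.usingUnions t).card : ℝ) ≠ 0 := by
    exact_mod_cast Finset.card_ne_zero_of_mem (usingUnions_nonempty hV ht).choose_spec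
  rw [← mul_div_assoc, mul_comm, mul_div_assoc, div_self hne, mul_one]

section Restrict

variable {Γ : GHP 𝒩 𝒦 ℳ} {i : 𝒩}

lemma mem_restrict_N {K' : Finset 𝒦} {j : 𝒩} :
    j ∈ (Γ.restrict K').N ↔ j ∈ Γ.N ∧ (Γ.T j ∩ K').Nonempty := by
  simp [restrict]

lemma restrict_K (Γ : GHP 𝒩 𝒦 ℳ) (K' : Finset 𝒦) : (Γ.restrict K').K = K' := rfl

lemma mem_restrict_T {K' : Finset 𝒦} {j : 𝒩} {t : 𝒦} :
    t ∈ (Γ.restrict K').T j ↔ t ∈ Γ.T j ∧ t ∈ K' := by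
  show t ∈ (if (Γ.T j ∩ K').Nonempty then Γ.T j ∩ K' else ∅) ↔ _
  split_ifs with h
  · simp [Finset.mem_inter]
  · simp only [Finset.not_nonempty_iff_eq_empty] at h
    simp only [Finset.notMem_empty, false_iff]
    rintro ⟨h1, h2⟩
    have : t ∈ Γ.T j ∩ K' := Finset.mem_inter.mpr ⟨h1, h2⟩
    rw [h] at this
    exact Finset.notMem_empty t this

lemma restrict_u_mem {K' : Finset 𝒦} {j : 𝒩} (hj : j ∈ (Γ.restrict K').N) :
    (Γ.restrict K').u j = Γ.u j := by
  simp only [restrict] at hj ⊢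
  rw [if_pos hj]

lemma restrict_u_not_mem {K' : Finset 𝒦} {j : 𝒩} (hj : j ∉ (Γ.restrict K').N) :
    (Γ.restrict K').u j = none := by
  simp only [restrict] at hj ⊢
  rw [if_neg hj]

lemma restrict_u_some {K' : Finset 𝒦} {j : 𝒩} {a : ℳ} :
    (Γ.restrict K').u j = some a ↔ j ∈ (Γ.restrict K').N ∧ Γ.u j = some a := by
  by_cases hj : j ∈ (Γ.restrict K').N
  · rw [restrict_u_mem hj]; tauto
  · rw [restrict_u_not_mem hj]; simp [hj]

lemma mem_restrict_part {K' : Finset 𝒦} {j : 𝒩} {a : ℳ} :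
    j ∈ (Γ.restrict K').part a ↔ j ∈ (Γ.restrict K').N ∧ Γ.u j = some a := by
  rw [mem_part, restrict_u_some]
  tauto

lemma mem_restrict_M {K' : Finset 𝒦} {a : ℳ} :
    a ∈ (Γ.restrict K').M ↔ a ∈ Γ.M ∧ ((Γ.restrict K').part a).Nonempty := by
  have he : (Γ.restrict K').part a
      = (Γ.N.filter (fun i => (Γ.T i ∩ K').Nonempty)).filter (fun i => Γ.u i = some a) := by
    ext j
    rw [mem_restrict_part, Finset.mem_filter]
    exact Iff.rfl
  show a ∈ Γ.M.filter _ ↔ _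
  rw [Finset.mem_filter, he]

lemma restrict_idem (Γ : GHP 𝒩 𝒦 ℳ) (K' : Finset 𝒦) :
    (Γ.restrict K').restrict K' = Γ.restrict K' := by
  set Γ' := Γ.restrict K' with hG
  have hTK : ∀ j, Γ'.T j ∩ K' = Γ.T j ∩ K' := by
    intro j
    show (if (Γ.T j ∩ K').Nonempty then Γ.T j ∩ K' else ∅) ∩ K' = _
    split_ifs with h
    · rw [Finset.inter_assoc, Finset.inter_self]
    · rw [Finset.empty_inter]
      rw [Finset.not_nonempty_iff_eq_empty] at h
      exact h.symm
  have hT : ∀ j, (Γ'.restrict K').T j = Γ'.T j := by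
    intro j
    show (if (Γ'.T j ∩ K').Nonempty then Γ'.T j ∩ K' else ∅)
        = (if (Γ.T j ∩ K').Nonempty then Γ.T j ∩ K' else ∅)
    rw [hTK]
  have hN : (Γ'.restrict K').N = Γ'.N := by
    ext j
    rw [mem_restrict_N]
    constructor
    · exact fun h => h.1
    · intro h
      refine ⟨h, ?_⟩
      rw [hTK]
      exact (mem_restrict_N.mp h).2
  have hu : (Γ'.restrict K').u = Γ'.u := by
    funext j
    by_cases hj : j ∈ (Γ'.restrict K').N
    · rw [restrict_u_mem hj]
    · rw [restrict_u_not_mem hj]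
      rw [hN] at hj
      exact (restrict_u_not_mem hj).symm
  have hpart : ∀ a, (Γ'.restrict K').part a = Γ'.part a := by
    intro a; unfold part; rw [hN, hu]
  have hM : (Γ'.restrict K').M = Γ'.M := by
    ext a
    rw [mem_restrict_M, hpart]
    constructor
    · exact fun h => h.1
    · intro h
      exact ⟨h, (mem_restrict_M.mp h).2⟩
  have hC : (Γ'.restrict K').C = Γ'.C := by
    funext t
    show (if t ∈ K' then Γ'.C t else 0) = Γ'.C t
    split_ifs with h
    · rfl
    · show 0 = if t ∈ K' then Γ.C t else 0
      rw [if_neg h]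
  exact ghp_ext hN rfl hC (funext hT) hM hu

lemma restrict_T_self (hV : Γ.Valid) (hi : i ∈ Γ.N) :
    (Γ.restrict (Γ.T i)).T i = Γ.T i := by
  have h : (Γ.T i ∩ Γ.T i).Nonempty := by
    rw [Finset.inter_self]; exact (hV.1 i hi).1
  show (if (Γ.T i ∩ Γ.T i).Nonempty then Γ.T i ∩ Γ.T i else ∅) = Γ.T i
  rw [if_pos h, Finset.inter_self]

lemma restrict_valid (hV : Γ.Valid) (hi : i ∈ Γ.N) :
    (Γ.restrict (Γ.T i)).Valid := by
  obtain ⟨hT, hTout, hKcov, hC0, hCout, hu, huout, hpartne⟩ := hV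
  have hiN' : i ∈ (Γ.restrict (Γ.T i)).N :=
    mem_restrict_N.mpr ⟨hi, by rw [Finset.inter_self]; exact (hT i hi).1⟩
  refine ⟨?_, ?_, ?_, ?_, ?_, ?_, ?_, ?_⟩
  · intro j hj
    obtain ⟨hjN, hne⟩ := mem_restrict_N.mp hj
    obtain ⟨t, ht⟩ := hne
    obtain ⟨h1, h2⟩ := Finset.mem_inter.mp ht
    exact ⟨⟨t, mem_restrict_T.mpr ⟨h1, h2⟩⟩, fun s hs => (mem_restrict_T.mp hs).2⟩
  · intro j hj
    rw [Finset.eq_empty_iff_forall_notMem]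
    intro t ht
    obtain ⟨h1, h2⟩ := mem_restrict_T.mp ht
    by_cases hjN : j ∈ Γ.N
    · exact hj (mem_restrict_N.mpr ⟨hjN, ⟨t, Finset.mem_inter.mpr ⟨h1, h2⟩⟩⟩)
    · rw [hTout j hjN] at h1
      exact Finset.notMem_empty t h1
  · intro t ht
    exact ⟨i, hiN', mem_restrict_T.mpr ⟨ht, ht⟩⟩
  · intro t
    show (0:ℝ) ≤ if _ then _ else _
    split_ifs
    · exact hC0 t
    · exact le_refl 0
  · intro t ht
    exact if_neg ht
  · intro j hj
    obtain ⟨hjN, hne⟩ := mem_restrict_N.mp hj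
    obtain ⟨a, haM, hua⟩ := hu j hjN
    exact ⟨a, mem_restrict_M.mpr ⟨haM, ⟨j, mem_restrict_part.mpr ⟨hj, hua⟩⟩⟩,
      restrict_u_some.mpr ⟨hj, hua⟩⟩
  · exact fun j hj => restrict_u_not_mem hj
  · intro a ha
    exact (mem_restrict_M.mp ha).2

lemma restrict_usingUnions (hV : Γ.Valid) (hi : i ∈ Γ.N) {t : 𝒦} (ht : t ∈ Γ.T i) :
    (Γ.restrict (Γ.T i)).usingUnions t = Γ.usingUnions t := by
  ext a
  simp only [usingUnions, Finset.mem_filter, mem_unionSections]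
  constructor
  · rintro ⟨haM', j, hj, hjt⟩
    obtain ⟨hjN', hja⟩ := mem_restrict_part.mp hj
    exact ⟨(mem_restrict_M.mp haM').1,
      j, mem_part.mpr ⟨(mem_restrict_N.mp hjN').1, hja⟩, (mem_restrict_T.mp hjt).1⟩
  · rintro ⟨haM, j, hj, hjt⟩
    obtain ⟨hjN, hja⟩ := mem_part.mp hj
    have hjN' : j ∈ (Γ.restrict (Γ.T i)).N :=
      mem_restrict_N.mpr ⟨hjN, ⟨t, Finset.mem_inter.mpr ⟨hjt, ht⟩⟩⟩
    have hj' : j ∈ (Γ.restrict (Γ.T i)).part a := mem_restrict_part.mpr ⟨hjN', hja⟩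
    exact ⟨mem_restrict_M.mpr ⟨haM, ⟨j, hj'⟩⟩, j, hj', mem_restrict_T.mpr ⟨hjt, ht⟩⟩

lemma restrict_usingMates (hV : Γ.Valid) (hi : i ∈ Γ.N) {t : 𝒦} (ht : t ∈ Γ.T i) :
    (Γ.restrict (Γ.T i)).usingMates i t = Γ.usingMates i t := by
  obtain ⟨a, haM, hua⟩ := hV.2.2.2.2.2.1 i hi
  have hiN' : i ∈ (Γ.restrict (Γ.T i)).N :=
    mem_restrict_N.mpr ⟨hi, by rw [Finset.inter_self]; exact (hV.1 i hi).1⟩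
  have hui' : (Γ.restrict (Γ.T i)).u i = some a := restrict_u_some.mpr ⟨hiN', hua⟩
  rw [usingMates_eq hui', usingMates_eq hua]
  ext j
  simp only [Finset.mem_filter]
  constructor
  · rintro ⟨hj, hjt⟩
    obtain ⟨hjN', hja⟩ := mem_restrict_part.mp hj
    exact ⟨mem_part.mpr ⟨(mem_restrict_N.mp hjN').1, hja⟩, (mem_restrict_T.mp hjt).1⟩
  · rintro ⟨hj, hjt⟩
    obtain ⟨hjN, hja⟩ := mem_part.mp hj
    have hjN' : j ∈ (Γ.restrict (Γ.T i)).N :=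
      mem_restrict_N.mpr ⟨hjN, ⟨t, Finset.mem_inter.mpr ⟨hjt, ht⟩⟩⟩
    exact ⟨mem_restrict_part.mpr ⟨hjN', hja⟩, mem_restrict_T.mpr ⟨hjt, ht⟩⟩

lemma restrict_owen (hV : Γ.Valid) (hi : i ∈ Γ.N) :
    (Γ.restrict (Γ.T i)).owen i = Γ.owen i := by
  unfold owen
  rw [restrict_T_self hV hi]
  refine Finset.sum_congr rfl (fun t ht => ?_)
  rw [restrict_usingUnions hV hi ht, restrict_usingMates hV hi ht]
  congr 1
  simp [restrict, ht]

end Restrict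

end GHP

open GHP

/-- uniqueness part of the Owen characterization: any solution
on generalized highway problems with a coalitional structure satisfying (PO),
(ETPA), (ETPU) and (IIOC) coincides with the Owen value
`σ_i(Γ,P) = Σ_{t∈T(i)} C(t)/(|𝒜_t|·|N_t^a|)`. -/
theorem owen_uniqueness
    {𝒩 𝒦 ℳ : Type*} [DecidableEq 𝒩] [DecidableEq 𝒦] [DecidableEq ℳ]
    (σ : GHP 𝒩 𝒦 ℳ → 𝒩 → ℝ)
    -- (PO)
    (hPO : ∀ Γ : GHP 𝒩 𝒦 ℳ, Γ.Valid → ∑ i ∈ Γ.N, σ Γ i = ∑ t ∈ Γ.K, Γ.C t)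
    -- (ETPA)
    (hETPA : ∀ Γ : GHP 𝒩 𝒦 ℳ, Γ.Valid → ∀ a ∈ Γ.M, ∀ i ∈ Γ.part a, ∀ j ∈ Γ.part a,
      Γ.T i = Γ.T j → σ Γ i = σ Γ j)
    -- (ETPU)
    (hETPU : ∀ Γ : GHP 𝒩 𝒦 ℳ, Γ.Valid → ∀ a ∈ Γ.M, ∀ b ∈ Γ.M,
      Γ.unionSections a = Γ.unionSections b →
      ∑ i ∈ Γ.part a, σ Γ i = ∑ i ∈ Γ.part b, σ Γ i)
    -- (IIOC)
    (hIIOC : ∀ Γ Γ' : GHP 𝒩 𝒦 ℳ, Γ.Valid → Γ'.Valid → ∀ i, i ∈ Γ.N → i ∈ Γ'.N →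
      Γ.restrict (Γ.T i) = Γ'.restrict (Γ'.T i) → σ Γ i = σ Γ' i) :
    ∀ Γ : GHP 𝒩 𝒦 ℳ, Γ.Valid → ∀ a ∈ Γ.M, ∀ i ∈ Γ.part a,
      σ Γ i = ∑ t ∈ Γ.T i, Γ.C t /
        (((Γ.usingUnions t).card : ℝ) * ((Γ.usingMates i t).card : ℝ)) := by
  have key : ∀ n : ℕ, ∀ Γ : GHP 𝒩 𝒦 ℳ, Γ.K.card ≤ n → Γ.Valid →
      ∀ i ∈ Γ.N, σ Γ i = Γ.owen i := by
    intro n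
    induction n with
    | zero =>
      intro Γ hn hV i hi
      have hK : Γ.K = ∅ := Finset.card_eq_zero.mp (Nat.le_zero.mp hn)
      obtain ⟨⟨t, ht⟩, hsub⟩ := hV.1 i hi
      have := hsub ht
      rw [hK] at this
      exact absurd this (Finset.notMem_empty t)
    | succ n IH =>
      intro Γ hn hV i hi
      have claim1 : ∀ j ∈ Γ.N, Γ.T j ≠ Γ.K → σ Γ j = Γ.owen j := by
        intro j hj hTj
        have hss : Γ.T j ⊂ Γ.K := Finset.ssubset_iff_subset_ne.mpr ⟨(hV.1 j hj).2, hTj⟩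
        have hcard : (Γ.restrict (Γ.T j)).K.card ≤ n := by
          have h1 : (Γ.T j).card < Γ.K.card := Finset.card_lt_card hss
          show (Γ.T j).card ≤ n
          omega
        have hV' := restrict_valid hV hj
        have hjN' : j ∈ (Γ.restrict (Γ.T j)).N :=
          mem_restrict_N.mpr ⟨hj, by rw [Finset.inter_self]; exact (hV.1 j hj).1⟩
        have h1 : σ Γ j = σ (Γ.restrict (Γ.T j)) j := by
          apply hIIOC Γ _ hV hV' j hj hjN'
          rw [restrict_T_self hV hj, restrict_idem]
        rw [h1, IH _ hcard hV' j hjN', restrict_owen hV hj]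
      by_cases hTi : Γ.T i = Γ.K
      · obtain ⟨a, haM, hua⟩ := hV.2.2.2.2.2.1 i hi
        have hipart : i ∈ Γ.part a := mem_part.mpr ⟨hi, hua⟩
        have haUS : Γ.unionSections a = Γ.K := by
          refine Finset.Subset.antisymm (unionSections_subset hV a) ?_
          rw [← hTi]
          exact fun t ht => mem_unionSections.mpr ⟨i, hipart, ht⟩
        have hMsum : ∑ b ∈ Γ.M, ∑ j ∈ Γ.part b, σ Γ j
            = ∑ b ∈ Γ.M, ∑ j ∈ Γ.part b, Γ.owen j := by
          rw [← sum_parts hV, ← sum_parts hV, hPO Γ hV, sum_owen_N hV]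
        have hnotfull : ∀ b ∈ Γ.M, ¬ (Γ.unionSections b = Γ.K) →
            ∑ j ∈ Γ.part b, σ Γ j = ∑ j ∈ Γ.part b, Γ.owen j := by
          intro b hb hpb
          refine Finset.sum_congr rfl fun j hj => claim1 j (mem_part.mp hj).1 fun hTj => ?_
          refine hpb (Finset.Subset.antisymm (unionSections_subset hV b) ?_)
          rw [← hTj]
          exact fun t ht => mem_unionSections.mpr ⟨j, hj, ht⟩
        have hUsum : ∑ b ∈ Γ.M.filter (fun b => Γ.unionSections b = Γ.K), ∑ j ∈ Γ.part b, σ Γ j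
            = ∑ b ∈ Γ.M.filter (fun b => Γ.unionSections b = Γ.K), ∑ j ∈ Γ.part b, Γ.owen j := by
          have e1 := Finset.sum_filter_add_sum_filter_not Γ.M
            (fun b => Γ.unionSections b = Γ.K) (fun b => ∑ j ∈ Γ.part b, σ Γ j)
          have e2 := Finset.sum_filter_add_sum_filter_not Γ.M
            (fun b => Γ.unionSections b = Γ.K) (fun b => ∑ j ∈ Γ.part b, Γ.owen j)
          have e3 : ∑ b ∈ Γ.M.filter (fun b => ¬ (Γ.unionSections b = Γ.K)),
                ∑ j ∈ Γ.part b, σ Γ j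
              = ∑ b ∈ Γ.M.filter (fun b => ¬ (Γ.unionSections b = Γ.K)),
                ∑ j ∈ Γ.part b, Γ.owen j :=
            Finset.sum_congr rfl fun b hb =>
              hnotfull b (Finset.mem_filter.mp hb).1 (Finset.mem_filter.mp hb).2
          linarith [e1, e2, e3, hMsum]
        have haU : a ∈ Γ.M.filter (fun b => Γ.unionSections b = Γ.K) :=
          Finset.mem_filter.mpr ⟨haM, haUS⟩
        have hSa : ∑ j ∈ Γ.part a, σ Γ j = ∑ j ∈ Γ.part a, Γ.owen j := by
          have hs : ∀ b ∈ Γ.M.filter (fun b => Γ.unionSections b = Γ.K),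
              ∑ j ∈ Γ.part b, σ Γ j = ∑ j ∈ Γ.part a, σ Γ j := fun b hb =>
            hETPU Γ hV b (Finset.mem_filter.mp hb).1 a haM
              (by rw [(Finset.mem_filter.mp hb).2, haUS])
          have ho : ∀ b ∈ Γ.M.filter (fun b => Γ.unionSections b = Γ.K),
              ∑ j ∈ Γ.part b, Γ.owen j = ∑ j ∈ Γ.part a, Γ.owen j := fun b hb => by
            rw [sum_owen_part, sum_owen_part, (Finset.mem_filter.mp hb).2, haUS]
          rw [Finset.sum_congr rfl hs, Finset.sum_congr rfl ho,
            Finset.sum_const, Finset.sum_const, nsmul_eq_mul, nsmul_eq_mul] at hUsum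
          have hcard : ((Γ.M.filter (fun b => Γ.unionSections b = Γ.K)).card : ℝ) ≠ 0 := by
            exact_mod_cast Finset.card_ne_zero_of_mem haU
          exact mul_left_cancel₀ hcard hUsum
        have hFa : ∑ j ∈ (Γ.part a).filter (fun j => Γ.T j = Γ.K), σ Γ j
            = ∑ j ∈ (Γ.part a).filter (fun j => Γ.T j = Γ.K), Γ.owen j := by
          have e1 := Finset.sum_filter_add_sum_filter_not (Γ.part a)
            (fun j => Γ.T j = Γ.K) (σ Γ)
          have e2 := Finset.sum_filter_add_sum_filter_not (Γ.part a)
            (fun j => Γ.T j = Γ.K) (Γ.owen)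
          have e3 : ∑ j ∈ (Γ.part a).filter (fun j => ¬ (Γ.T j = Γ.K)), σ Γ j
              = ∑ j ∈ (Γ.part a).filter (fun j => ¬ (Γ.T j = Γ.K)), Γ.owen j :=
            Finset.sum_congr rfl fun j hj =>
              claim1 j (mem_part.mp (Finset.mem_filter.mp hj).1).1 (Finset.mem_filter.mp hj).2
          linarith [e1, e2, e3, hSa]
        have hiF : i ∈ (Γ.part a).filter (fun j => Γ.T j = Γ.K) :=
          Finset.mem_filter.mpr ⟨hipart, hTi⟩
        have hs : ∀ j ∈ (Γ.part a).filter (fun j => Γ.T j = Γ.K), σ Γ j = σ Γ i := fun j hj =>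
          hETPA Γ hV a haM j (Finset.mem_filter.mp hj).1 i hipart
            (by rw [(Finset.mem_filter.mp hj).2, hTi])
        have ho : ∀ j ∈ (Γ.part a).filter (fun j => Γ.T j = Γ.K), Γ.owen j = Γ.owen i :=
          fun j hj =>
            owen_congr (by rw [(mem_part.mp (Finset.mem_filter.mp hj).1).2, hua])
              (by rw [(Finset.mem_filter.mp hj).2, hTi])
        rw [Finset.sum_congr rfl hs, Finset.sum_congr rfl ho,
          Finset.sum_const, Finset.sum_const, nsmul_eq_mul, nsmul_eq_mul] at hFa
        have hcard : (((Γ.part a).filter (fun j => Γ.T j = Γ.K)).card : ℝ) ≠ 0 := by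
          exact_mod_cast Finset.card_ne_zero_of_mem hiF
        exact mul_left_cancel₀ hcard hFa
      · exact claim1 i hi hTi
  intro Γ hV a ha i hi
  exact key Γ.K.card Γ le_rfl hV i (mem_part.mp hi).1
end
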